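/- Let G be a finite simple graph on vertex set V and let u, w ∈ V be adjacent in G. Suppose f = ∏_{j=1}^{d} p_{I_j} − ∏_{j=1}^{d} p_{J_j} is a nonzero binomial in I_G such that I_j(u) = I_j(w) and J_j(u) = J_j(w) for all j ∈ {1,…,d}. Let G/uw be the graph on V∖{w} in which distinct vertices a, b are adjacent iff a and b are adjacent in G, or a = u and w is adjacent to b in G, or b = u and w is adjacent to a in G; and let f̃ = ∏_{j=1}^{d} p_{I_j|_{V∖{w}}} − ∏_{j=1}^{d} p_{J_j|_{V∖{w}}}. Then f̃ ∈ I_{G/uw}, and f is a minimal generator of I_G if and only if f̃ is a minimal generator of I_{G/uw}. -/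

import Mathlib

open MvPolynomial Finset

namespace BinaryGraphModels

variable {V : Type} [Fintype V] [DecidableEq V]

/-- The monomial map `φ_G` of the binary graph model: the variable `p_I` is sent to the
product over edges `{j,k}` of the variable `t^{jk}_{I(j)I(k)}` (encoded as the unordered pair
`{(j, I j), (k, I k)}`) times the product over isolated vertices `l` of `t^{l}_{I(l)}`. -/
noncomputable def phi (G : SimpleGraph V) :
    MvPolynomial (V → Bool) ℂ →ₐ[ℂ] MvPolynomial (Sym2 (V × Bool) ⊕ (V × Bool)) ℂ := by
  letI : DecidableRel G.Adj := Classical.decRel _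
  exact aeval fun I : V → Bool =>
    (∏ e ∈ G.edgeFinset,
      (X (Sum.inl (Sym2.map (fun v => (v, I v)) e)) :
        MvPolynomial (Sym2 (V × Bool) ⊕ (V × Bool)) ℂ)) *
    ∏ l ∈ univ.filter (fun l : V => ∀ k, ¬ G.Adj l k), X (Sum.inr (l, I l))

/-- The toric ideal `I_G` of the binary graph model of `G`. -/
noncomputable def toricIdeal (G : SimpleGraph V) : Ideal (MvPolynomial (V → Bool) ℂ) :=
  RingHom.ker (phi G).toRingHom

/-- `I_G` is generated in degree at most `d`. -/
def GenInDegLE (G : SimpleGraph V) (d : ℕ) : Prop :=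
  toricIdeal G =
    Ideal.span {f : MvPolynomial (V → Bool) ℂ | f ∈ toricIdeal G ∧ f.totalDegree ≤ d}

/-- The Markov width `μ(G)`: the least `d` such that `I_G` is generated in degree `≤ d`. -/
noncomputable def markovWidth (G : SimpleGraph V) : ℕ :=
  sInf {d : ℕ | GenInDegLE G d}

/-- `f` is a minimal generator of `I_G`, i.e. `f ∈ I_G` and `f ∉ 𝔪 · I_G` where `𝔪` is the
irrelevant maximal ideal generated by all the variables. -/
def IsMinimalGenerator (G : SimpleGraph V) (f : MvPolynomial (V → Bool) ℂ) : Prop :=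
  f ∈ toricIdeal G ∧
    f ∉ Ideal.span (Set.range (X : (V → Bool) → MvPolynomial (V → Bool) ℂ)) * toricIdeal G

/-- Two integer tables have the same `G`-marginals: equal two-way marginals along every edge
and equal one-way marginals at every isolated vertex. -/
def MarginalsEq (G : SimpleGraph V) (v₁ v₂ : (V → Bool) → ℤ) : Prop :=
  (∀ j k : V, G.Adj j k → ∀ a b : Bool,
    (∑ I : V → Bool, if I j = a ∧ I k = b then v₁ I else 0) =
    (∑ I : V → Bool, if I j = a ∧ I k = b then v₂ I else 0)) ∧
  (∀ l : V, (∀ k, ¬ G.Adj l k) → ∀ a : Bool,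
    (∑ I : V → Bool, if I l = a then v₁ I else 0) =
    (∑ I : V → Bool, if I l = a then v₂ I else 0))

/-- `B` is a Markov basis for `G`: any two nonnegative tables with the same `G`-marginals are
connected by a path of moves from `±B` staying nonnegative. -/
def IsMarkovBasis (G : SimpleGraph V) (B : Finset ((V → Bool) → ℤ)) : Prop :=
  ∀ v₁ v₂ : (V → Bool) → ℤ, (∀ I, 0 ≤ v₁ I) → (∀ I, 0 ≤ v₂ I) →
    MarginalsEq G v₁ v₂ →
    ∃ L : List ((V → Bool) → ℤ),
      (∀ u ∈ L, u ∈ B ∨ -u ∈ B) ∧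
      v₁ + L.sum = v₂ ∧
      ∀ n : ℕ, n ≤ L.length → ∀ I, 0 ≤ (v₁ + (L.take n).sum) I

/-- The binomial `p^{u⁺} - p^{u⁻}` associated to an integer table `u`. -/
noncomputable def moveBinomial (u : (V → Bool) → ℤ) : MvPolynomial (V → Bool) ℂ :=
  (∏ I : V → Bool, X I ^ (u I).toNat) - ∏ I : V → Bool, X I ^ (-u I).toNat

end BinaryGraphModels

namespace BinaryGraphModels

/-- The graph obtained from `G` by contracting the edge `{u, w}` onto the vertex `u`: on the
vertex set `V ∖ {w}`, distinct vertices `a, b` are adjacent iff they were adjacent in `G`, or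
`a = u` and `w` was adjacent to `b`, or `b = u` and `w` was adjacent to `a`. -/
def contractEdge {V : Type} (G : SimpleGraph V) (u w : V) :
    SimpleGraph {x : V // x ≠ w} where
  Adj a b := a ≠ b ∧
    (G.Adj a.val b.val ∨ (a.val = u ∧ G.Adj w b.val) ∨ (b.val = u ∧ G.Adj w a.val))
  symm := by
    constructor
    rintro a b ⟨hne, h⟩
    refine ⟨hne.symm, ?_⟩
    rcases h with h | h | h
    · exact Or.inl h.symm
    · exact Or.inr (Or.inr h)
    · exact Or.inr (Or.inl h)
  loopless := ⟨fun a h => h.1 rfl⟩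


section EdgeContractionAux

set_option linter.unusedSectionVars false

variable {U : Type} [Fintype U] [DecidableEq U]
variable {V : Type} [Fintype V] [DecidableEq V]

lemma prod_monomial_one {α τ : Type} [DecidableEq α] (F : Finset α) (d : α → (τ →₀ ℕ)) :
    ∏ e ∈ F, (monomial (d e) (1:ℂ)) = monomial (∑ e ∈ F, d e) 1 := by
  classical
  induction F using Finset.induction with
  | empty => simp
  | insert _ _ h ih => rw [Finset.prod_insert h, ih, Finset.sum_insert h, monomial_mul, one_mul]

noncomputable def DD (G : SimpleGraph V) (I : V → Bool) : (Sym2 (V × Bool) ⊕ (V × Bool)) →₀ ℕ := by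
  letI : DecidableRel G.Adj := Classical.decRel _
  exact (∑ e ∈ G.edgeFinset, Finsupp.single (Sum.inl (Sym2.map (fun v => (v, I v)) e)) 1) +
    ∑ l ∈ univ.filter (fun l : V => ∀ k, ¬ G.Adj l k), Finsupp.single (Sum.inr (l, I l)) 1

lemma phi_X (G : SimpleGraph V) (I : V → Bool) :
    phi G (X I) = monomial (DD G I) 1 := by
  letI : DecidableRel G.Adj := Classical.decRel _
  simp only [phi, DD, aeval_X]
  simp only [show ∀ (a : Sym2 (V × Bool) ⊕ (V × Bool)), (X a : MvPolynomial (Sym2 (V × Bool) ⊕ (V × Bool)) ℂ) = monomial (Finsupp.single a 1) 1 from fun a => rfl]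
  rw [prod_monomial_one, prod_monomial_one, monomial_mul, one_mul]


noncomputable def TT (G : SimpleGraph V) (s : (V → Bool) →₀ ℕ) :
    (Sym2 (V × Bool) ⊕ (V × Bool)) →₀ ℕ :=
  ∑ I : V → Bool, s I • DD G I

lemma phi_monomial (G : SimpleGraph V) (s : (V → Bool) →₀ ℕ) :
    phi G (monomial s 1) = monomial (TT G s) 1 := by
  rw [show (monomial s (1:ℂ)) = ∏ I : V → Bool, (X I) ^ (s I) by
    rw [monomial_eq, Finsupp.prod_fintype _ _ (fun i => pow_zero _), map_one, one_mul]]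
  rw [map_prod]
  have : ∀ I : V → Bool, phi G (X I ^ s I) = monomial (s I • DD G I) 1 := by
    intro I
    rw [map_pow, phi_X, monomial_pow, one_pow]
  simp only [this]
  rw [prod_monomial_one]
  rfl
lemma expand {σ : Type} {A : Type} [CommRing A] [Algebra ℂ A]
    (ψ : MvPolynomial σ ℂ →ₐ[ℂ] A) (g : MvPolynomial σ ℂ) :
    ψ g = ∑ s ∈ g.support, coeff s g • ψ (monomial s 1) := by
  conv_lhs => rw [g.as_sum]
  rw [map_sum]
  refine Finset.sum_congr rfl fun s _ => ?_
  rw [← map_smul, smul_monomial, smul_eq_mul, mul_one]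

lemma ker_le_ker {σ τ A : Type} [CommRing A] [Algebra ℂ A]
    (φ₁ : MvPolynomial σ ℂ →ₐ[ℂ] MvPolynomial τ ℂ) (φ₂ : MvPolynomial σ ℂ →ₐ[ℂ] A)
    (T : (σ →₀ ℕ) → (τ →₀ ℕ))
    (h₁ : ∀ s, φ₁ (monomial s 1) = monomial (T s) 1)
    (h₂ : ∀ s s', T s = T s' → φ₂ (monomial s 1) = φ₂ (monomial s' 1))
    {g : MvPolynomial σ ℂ} (hg : φ₁ g = 0) : φ₂ g = 0 := by
  classical
  have hfib : ∀ t, ∑ s ∈ g.support.filter (fun s => T s = t), coeff s g = 0 := by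
    intro t
    have h0 : coeff t (φ₁ g) = 0 := by rw [hg]; simp
    rw [expand φ₁ g] at h0
    simp only [h₁] at h0
    rw [MvPolynomial.coeff_sum] at h0
    rw [← h0, Finset.sum_filter]
    refine Finset.sum_congr rfl fun s _ => ?_
    rw [MvPolynomial.coeff_smul, coeff_monomial]
    by_cases h : T s = t <;> simp [h]
  have key : ∀ s₀ ∈ g.support,
      (fun _ : τ →₀ ℕ => (0:A)) (T s₀) =
        ∑ s ∈ g.support.filter (fun s => T s = T s₀), coeff s g • φ₂ (monomial s 1) := by
    intro s₀ _
    have hc : ∀ s ∈ g.support.filter (fun s => T s = T s₀),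
        coeff s g • φ₂ (monomial s 1) = coeff s g • φ₂ (monomial s₀ 1) := by
      intro s hs
      rw [h₂ s s₀ (Finset.mem_filter.1 hs).2]
    rw [Finset.sum_congr rfl hc, ← Finset.sum_smul, hfib (T s₀), zero_smul]
  have := Finset.sum_image' (f := fun _ : τ →₀ ℕ => (0:A)) (g := T)
    (s := g.support) (fun s => coeff s g • φ₂ (monomial s 1)) key
  rw [expand φ₂ g, ← this, Finset.sum_const_zero]

def Mg (s : (U → Bool) →₀ ℕ) (a : U) (c : Bool) (b : U) (d : Bool) : ℕ :=
  ∑ I : U → Bool, if I a = c ∧ I b = d then s I else 0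

def Ng (s : (U → Bool) →₀ ℕ) (a : U) (c : Bool) : ℕ :=
  ∑ I : U → Bool, if I a = c then s I else 0

lemma Mg_comm (s : (U → Bool) →₀ ℕ) (a : U) (c : Bool) (b : U) (d : Bool) :
    Mg s a c b d = Mg s b d a c := by
  unfold Mg; refine Finset.sum_congr rfl fun I _ => ?_
  simp only [and_comm]

lemma Mg_diag_ne (s : (U → Bool) →₀ ℕ) (a : U) {c d : Bool} (h : c ≠ d) :
    Mg s a c a d = 0 := by
  unfold Mg
  refine Finset.sum_eq_zero fun I _ => ?_
  rw [if_neg]; rintro ⟨h1, h2⟩; exact h (h1 ▸ h2 ▸ rfl)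

lemma Ng_eq_sum_Mg (s : (U → Bool) →₀ ℕ) (a : U) (c : Bool) (b : U) :
    Ng s a c = ∑ d : Bool, Mg s a c b d := by
  unfold Ng Mg
  rw [Finset.sum_comm]
  refine Finset.sum_congr rfl fun I _ => ?_
  by_cases h : I a = c <;> cases hb : I b <;> simp [h, hb]

lemma Mg_of_diag (s : (U → Bool) →₀ ℕ) {u w : U} (hs : ∀ I ∈ s.support, I u = I w)
    (c : Bool) (b : U) (d : Bool) : Mg s u c b d = Mg s w c b d := by
  unfold Mg
  refine Finset.sum_congr rfl fun I _ => ?_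
  by_cases h0 : s I = 0
  · simp [h0]
  · have := hs I (Finsupp.mem_support_iff.2 h0)
    rw [this]

lemma sum_smul_pair {γ : Type} [AddCommMonoid γ] (s : (U → Bool) →₀ ℕ) (a b : U)
    (h : Bool → Bool → γ) :
    ∑ I : U → Bool, s I • h (I a) (I b) = ∑ c : Bool, ∑ d : Bool, Mg s a c b d • h c d := by
  have hIc : ∀ I : U → Bool, s I • h (I a) (I b)
      = ∑ c : Bool, ∑ d : Bool, (if I a = c ∧ I b = d then s I • h c d else 0) := by
    intro I; simp [ite_and, Finset.sum_ite_eq]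
  simp only [hIc]
  rw [Finset.sum_comm]
  refine Finset.sum_congr rfl fun c _ => ?_
  rw [Finset.sum_comm]
  refine Finset.sum_congr rfl fun d _ => ?_
  unfold Mg
  rw [Finset.sum_smul]
  refine Finset.sum_congr rfl fun I _ => ?_
  rw [ite_smul, zero_smul]

lemma sum_smul_single {γ : Type} [AddCommMonoid γ] (s : (U → Bool) →₀ ℕ) (a : U)
    (h : Bool → γ) :
    ∑ I : U → Bool, s I • h (I a) = ∑ c : Bool, Ng s a c • h c := by
  have hIc : ∀ I : U → Bool, s I • h (I a)
      = ∑ c : Bool, (if I a = c then s I • h c else 0) := by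
    intro I; simp [Finset.sum_ite_eq]
  simp only [hIc]
  rw [Finset.sum_comm]
  refine Finset.sum_congr rfl fun c _ => ?_
  unfold Ng
  rw [Finset.sum_smul]
  refine Finset.sum_congr rfl fun I _ => ?_
  rw [ite_smul, zero_smul]

lemma TT_apply_inl (G : SimpleGraph V) (s : (V → Bool) →₀ ℕ) {j k : V} (hjk : G.Adj j k)
    (c d : Bool) :
    TT G s (Sum.inl s((j, c), (k, d))) = Mg s j c k d := by
  letI : DecidableRel G.Adj := Classical.decRel _
  unfold TT
  rw [Finset.sum_apply']
  have hDD : ∀ I : V → Bool,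
      (DD G I) (Sum.inl s((j, c), (k, d))) = if I j = c ∧ I k = d then 1 else 0 := by
    intro I
    simp only [DD, Finsupp.add_apply, Finset.sum_apply']
    have h2 : ∀ l ∈ univ.filter (fun l : V => ∀ k, ¬ G.Adj l k),
        (Finsupp.single (Sum.inr (l, I l)) 1 : (Sym2 (V × Bool) ⊕ (V × Bool)) →₀ ℕ)
          (Sum.inl s((j, c), (k, d))) = 0 := by
      intro l _
      rw [Finsupp.single_apply, if_neg]; simp
    rw [Finset.sum_congr rfl h2, Finset.sum_const_zero, add_zero]
    have h1 : ∀ e ∈ G.edgeFinset,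
        (Finsupp.single (Sum.inl (Sym2.map (fun v => (v, I v)) e)) 1 :
            (Sym2 (V × Bool) ⊕ (V × Bool)) →₀ ℕ) (Sum.inl s((j, c), (k, d)))
          = if e = s(j, k) ∧ (I j = c ∧ I k = d) then 1 else 0 := by
      intro e _
      rw [Finsupp.single_apply]
      refine if_congr ?_ rfl rfl
      induction e with
      | _ a b =>
        rw [Sym2.map_pair_eq, Sum.inl.injEq]
        constructor
        · intro h
          rcases Sym2.eq_iff.1 h with ⟨hl1, hl2⟩ | ⟨hl1, hl2⟩
          · obtain ⟨ha, hIa⟩ := Prod.mk.inj hl1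
            obtain ⟨hb, hIb⟩ := Prod.mk.inj hl2
            subst ha; subst hb
            exact ⟨rfl, hIa, hIb⟩
          · obtain ⟨ha, hIa⟩ := Prod.mk.inj hl1
            obtain ⟨hb, hIb⟩ := Prod.mk.inj hl2
            subst ha; subst hb
            exact ⟨Sym2.eq_swap, hIb, hIa⟩
        · rintro ⟨he, hc, hd⟩
          rcases Sym2.eq_iff.1 he with ⟨hl1, hl2⟩ | ⟨hl1, hl2⟩
          · subst hl1; subst hl2; rw [hc, hd]
          · subst hl1; subst hl2; rw [hc, hd, Sym2.eq_swap]
    rw [Finset.sum_congr rfl h1]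
    simp only [ite_and]
    rw [Finset.sum_ite_eq' G.edgeFinset (s(j,k))]
    rw [if_pos (SimpleGraph.mem_edgeFinset.2 hjk)]
  simp only [Finsupp.smul_apply, hDD]
  unfold Mg
  refine Finset.sum_congr rfl fun I _ => ?_
  by_cases h : I j = c ∧ I k = d <;> simp [h]

lemma TT_apply_inr (G : SimpleGraph V) (s : (V → Bool) →₀ ℕ) {l : V}
    (hl : ∀ k, ¬ G.Adj l k) (c : Bool) :
    TT G s (Sum.inr (l, c)) = Ng s l c := by
  letI : DecidableRel G.Adj := Classical.decRel _
  unfold TT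
  rw [Finset.sum_apply']
  have hDD : ∀ I : V → Bool,
      (DD G I) (Sum.inr (l, c)) = if I l = c then 1 else 0 := by
    intro I
    simp only [DD, Finsupp.add_apply, Finset.sum_apply']
    have h1 : ∀ e ∈ G.edgeFinset,
        (Finsupp.single (Sum.inl (Sym2.map (fun v => (v, I v)) e)) 1 :
            (Sym2 (V × Bool) ⊕ (V × Bool)) →₀ ℕ) (Sum.inr (l, c)) = 0 := by
      intro e _
      rw [Finsupp.single_apply, if_neg]; simp
    rw [Finset.sum_congr rfl h1, Finset.sum_const_zero, zero_add]
    have h2 : ∀ l' ∈ univ.filter (fun l' : V => ∀ k, ¬ G.Adj l' k),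
        (Finsupp.single (Sum.inr (l', I l')) 1 :
            (Sym2 (V × Bool) ⊕ (V × Bool)) →₀ ℕ) (Sum.inr (l, c))
          = if l' = l ∧ I l = c then 1 else 0 := by
      intro l' _
      rw [Finsupp.single_apply]
      refine if_congr ?_ rfl rfl
      rw [Sum.inr.injEq, Prod.mk.injEq]
      constructor
      · rintro ⟨h1, h2⟩; subst h1; exact ⟨rfl, h2⟩
      · rintro ⟨h1, h2⟩; subst h1; exact ⟨rfl, h2⟩
    rw [Finset.sum_congr rfl h2]
    simp only [ite_and]
    rw [Finset.sum_ite_eq' _ l]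
    rw [if_pos (Finset.mem_filter.2 ⟨Finset.mem_univ l, hl⟩)]
  simp only [Finsupp.smul_apply, hDD]
  unfold Ng
  refine Finset.sum_congr rfl fun I _ => ?_
  by_cases h : I l = c <;> simp [h]


def piS (u w : V) (hu : u ≠ w) (v : V) : {x : V // x ≠ w} :=
  if h : v = w then ⟨u, hu⟩ else ⟨v, h⟩

def resS (w : V) (I : V → Bool) : {x : V // x ≠ w} → Bool := fun x => I x.val

def extS (u w : V) (hu : u ≠ w) (I' : {x : V // x ≠ w} → Bool) : V → Bool :=
  fun v => I' (piS u w hu v)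

lemma piS_of_ne {u w : V} (hu : u ≠ w) {v : V} (hv : v ≠ w) : piS u w hu v = ⟨v, hv⟩ := by
  simp [piS, hv]

lemma piS_w {u w : V} (hu : u ≠ w) : piS u w hu w = ⟨u, hu⟩ := by simp [piS]

lemma resS_extS {u w : V} (hu : u ≠ w) (I' : {x : V // x ≠ w} → Bool) :
    resS w (extS u w hu I') = I' := by
  funext x
  simp only [resS, extS, piS_of_ne hu x.2]

lemma extS_resS {u w : V} (hu : u ≠ w) {I : V → Bool} (hd : I u = I w) :
    extS u w hu (resS w I) = I := by
  funext v
  by_cases h : v = w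
  · subst h; simp [extS, piS_w hu, resS, hd]
  · simp [extS, piS_of_ne hu h, resS]

noncomputable def PhiH (G : SimpleGraph V) (u w : V) :
    MvPolynomial (V → Bool) ℂ →ₐ[ℂ] MvPolynomial ({x : V // x ≠ w} → Bool) ℂ :=
  aeval fun K => if K u = K w then X (resS w K) else 0

noncomputable def XiH (u w : V) (hu : u ≠ w) :
    MvPolynomial ({x : V // x ≠ w} → Bool) ℂ →ₐ[ℂ] MvPolynomial (V → Bool) ℂ :=
  aeval fun K' => X (extS u w hu K')

lemma monomial_one_eq_prod {σ : Type} [Fintype σ] (s : σ →₀ ℕ) :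
    (monomial s (1:ℂ) : MvPolynomial σ ℂ) = ∏ K : σ, X K ^ s K := by
  rw [monomial_eq, Finsupp.prod_fintype _ _ (fun i => pow_zero _), map_one, one_mul]

lemma phi_map_monomial (G : SimpleGraph V) {σ : Type} [Fintype σ]
    (f : σ → (V → Bool)) (s : σ →₀ ℕ) :
    phi G (aeval (R := ℂ) (fun K => (X (f K) : MvPolynomial (V → Bool) ℂ)) (monomial s 1)) =
      monomial (∑ K : σ, s K • DD G (f K)) 1 := by
  rw [aeval_monomial, map_one, one_mul, Finsupp.prod_fintype _ _ (fun i => pow_zero _),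
    map_prod]
  have : ∀ K : σ, phi G ((X (f K) : MvPolynomial (V → Bool) ℂ) ^ s K)
      = monomial (s K • DD G (f K)) 1 := by
    intro K
    rw [map_pow, phi_X, monomial_pow, one_pow]
  simp only [this]
  classical
  rw [prod_monomial_one]

lemma diag_iff_Mg (s : (V → Bool) →₀ ℕ) (u w : V) :
    (∀ I ∈ s.support, I u = I w) ↔
      (Mg s u false w true = 0 ∧ Mg s u true w false = 0) := by
  constructor
  · intro hd
    constructor
    · refine Finset.sum_eq_zero fun I _ => ?_
      by_cases h0 : s I = 0
      · simp [h0]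
      · have := hd I (Finsupp.mem_support_iff.2 h0)
        rw [if_neg]
        rintro ⟨h1, h2⟩
        rw [h1, h2] at this
        exact Bool.false_ne_true this
    · refine Finset.sum_eq_zero fun I _ => ?_
      by_cases h0 : s I = 0
      · simp [h0]
      · have := hd I (Finsupp.mem_support_iff.2 h0)
        rw [if_neg]
        rintro ⟨h1, h2⟩
        rw [h1, h2] at this
        exact Bool.false_ne_true this.symm
  · rintro ⟨h1, h2⟩ I hI
    have hsI := Finsupp.mem_support_iff.1 hI
    by_contra hne
    cases hcu : I u <;> cases hcw : I w
    · exact hne (hcu.trans hcw.symm)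
    · exact hsI (by simpa [Mg, hcu, hcw] using Finset.sum_eq_zero_iff.1 h1 I (Finset.mem_univ I))
    · exact hsI (by simpa [Mg, hcu, hcw] using Finset.sum_eq_zero_iff.1 h2 I (Finset.mem_univ I))
    · exact hne (hcu.trans hcw.symm)

lemma PhiH_monomial_nondiag (G : SimpleGraph V) (u w : V) (s : (V → Bool) →₀ ℕ)
    (hd : ¬ ∀ I ∈ s.support, I u = I w) :
    PhiH G u w (monomial s 1) = 0 := by
  push_neg at hd
  obtain ⟨I₀, hI₀s, hI₀⟩ := hd
  unfold PhiH
  rw [aeval_monomial, map_one, one_mul, Finsupp.prod_fintype _ _ (fun i => pow_zero _)]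
  refine Finset.prod_eq_zero (Finset.mem_univ I₀) ?_
  rw [if_neg hI₀, zero_pow (Finsupp.mem_support_iff.1 hI₀s)]

lemma PhiH_monomial_diag (G : SimpleGraph V) (u w : V) (s : (V → Bool) →₀ ℕ)
    (hd : ∀ I ∈ s.support, I u = I w) :
    phi (contractEdge G u w) (PhiH G u w (monomial s 1)) =
      monomial (∑ I : V → Bool, s I • DD (contractEdge G u w) (resS w I)) 1 := by
  unfold PhiH
  rw [aeval_monomial, map_one, one_mul, Finsupp.prod_fintype _ _ (fun i => pow_zero _),
    map_prod]
  have : ∀ I : V → Bool,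
      phi (contractEdge G u w) ((if I u = I w then X (resS w I) else 0) ^ s I)
        = monomial (s I • DD (contractEdge G u w) (resS w I)) 1 := by
    intro I
    by_cases hI : I u = I w
    · rw [if_pos hI, map_pow, phi_X, monomial_pow, one_pow]
    · have hs0 : s I = 0 := by
        by_contra h0
        exact hI (hd I (Finsupp.mem_support_iff.2 h0))
      rw [hs0, pow_zero, map_one, zero_smul, monomial_zero', C_1]
  simp only [this]
  classical
  rw [prod_monomial_one]

lemma TPeq (G : SimpleGraph V) (u w : V) (huw : G.Adj u w) (s s' : (V → Bool) →₀ ℕ)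
    (hd : ∀ I ∈ s.support, I u = I w) (hd' : ∀ I ∈ s'.support, I u = I w)
    (hM : ∀ j k, G.Adj j k → ∀ c d, Mg s j c k d = Mg s' j c k d)
    (hN : ∀ l, (∀ k, ¬ G.Adj l k) → ∀ c, Ng s l c = Ng s' l c) :
    ∑ I : V → Bool, s I • DD (contractEdge G u w) (resS w I) =
      ∑ I : V → Bool, s' I • DD (contractEdge G u w) (resS w I) := by
  have hMg' : ∀ (a b : {x : V // x ≠ w}), (contractEdge G u w).Adj a b →
      ∀ c d, Mg s a.val c b.val d = Mg s' a.val c b.val d := by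
    rintro a b ⟨hne, hcase⟩ c d
    rcases hcase with h | ⟨hau, hwb⟩ | ⟨hbu, hwa⟩
    · exact hM _ _ h c d
    · rw [hau, Mg_of_diag s hd, hM _ _ hwb, ← Mg_of_diag s' hd']
    · rw [hbu, Mg_comm, Mg_of_diag s hd, hM _ _ hwa, ← Mg_of_diag s' hd', ← Mg_comm]
  have hNg' : ∀ (l : {x : V // x ≠ w}), (∀ k, ¬ (contractEdge G u w).Adj l k) →
      ∀ c, Ng s l.val c = Ng s' l.val c := by
    intro l hl c
    by_cases hlu : l.val = u
    · rw [hlu, Ng_eq_sum_Mg s u c w, Ng_eq_sum_Mg s' u c w]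
      exact Finset.sum_congr rfl fun d _ => hM u w huw c d
    · refine hN l.val (fun k hk => ?_) c
      by_cases hkw : k = w
      · subst hkw
        exact hl ⟨u, huw.ne⟩ ⟨fun h => hlu (congrArg Subtype.val h),
          Or.inr (Or.inr ⟨rfl, hk.symm⟩)⟩
      · refine hl ⟨k, hkw⟩ ⟨fun h => ?_, Or.inl hk⟩
        exact G.loopless.irrefl k (by have := congrArg Subtype.val h; simp at this; rwa [this] at hk)
  letI : DecidableRel (contractEdge G u w).Adj := Classical.decRel _
  simp only [DD, smul_add, Finset.sum_add_distrib]
  refine congrArg₂ (· + ·) ?_ ?_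
  · simp only [Finset.smul_sum]
    rw [Finset.sum_comm, Finset.sum_comm (s := Finset.univ)]
    refine Finset.sum_congr rfl fun e' => ?_
    induction e' with
    | _ a b =>
      intro he'
      have hab : (contractEdge G u w).Adj a b :=
        ((contractEdge G u w).mem_edgeSet).1 (SimpleGraph.mem_edgeFinset.1 he')
      simp only [Sym2.map_pair_eq, resS]
      rw [sum_smul_pair s a.val b.val
          (fun c d => Finsupp.single (Sum.inl s((a, c), (b, d))) (1:ℕ)),
        sum_smul_pair s' a.val b.val
          (fun c d => Finsupp.single (Sum.inl s((a, c), (b, d))) (1:ℕ))]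
      exact Finset.sum_congr rfl fun c _ => Finset.sum_congr rfl fun d _ => by
        rw [hMg' a b hab c d]
  · simp only [Finset.smul_sum]
    rw [Finset.sum_comm, Finset.sum_comm (s := Finset.univ)]
    refine Finset.sum_congr rfl fun l' hl' => ?_
    have hiso : ∀ k, ¬ (contractEdge G u w).Adj l' k := (Finset.mem_filter.1 hl').2
    simp only [resS]
    rw [sum_smul_single s l'.val (fun c => Finsupp.single (Sum.inr (l', c)) (1:ℕ)),
      sum_smul_single s' l'.val (fun c => Finsupp.single (Sum.inr (l', c)) (1:ℕ))]
    exact Finset.sum_congr rfl fun c _ => by rw [hNg' l' hiso c]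
lemma keyPhi (G : SimpleGraph V) (u w : V) (huw : G.Adj u w) (s s' : (V → Bool) →₀ ℕ)
    (hT : TT G s = TT G s') :
    phi (contractEdge G u w) (PhiH G u w (monomial s 1)) =
      phi (contractEdge G u w) (PhiH G u w (monomial s' 1)) := by
  have hM : ∀ j k, G.Adj j k → ∀ c d, Mg s j c k d = Mg s' j c k d := fun j k hjk c d => by
    rw [← TT_apply_inl G s hjk, ← TT_apply_inl G s' hjk, hT]
  have hN : ∀ l, (∀ k, ¬ G.Adj l k) → ∀ c, Ng s l c = Ng s' l c := fun l hl c => by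
    rw [← TT_apply_inr G s hl, ← TT_apply_inr G s' hl, hT]
  have hMuw : ∀ c d, Mg s u c w d = Mg s' u c w d := hM u w huw
  by_cases hdg : ∀ I ∈ s.support, I u = I w
  · have hdg' : ∀ I ∈ s'.support, I u = I w := by
      refine (diag_iff_Mg s' u w).2 ?_
      obtain ⟨h1, h2⟩ := (diag_iff_Mg s u w).1 hdg
      exact ⟨(hMuw false true) ▸ h1, (hMuw true false) ▸ h2⟩
    rw [PhiH_monomial_diag G u w s hdg, PhiH_monomial_diag G u w s' hdg',
      TPeq G u w huw s s' hdg hdg' hM hN]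
  · have hdg' : ¬ ∀ I ∈ s'.support, I u = I w := by
      intro h
      refine hdg ((diag_iff_Mg s u w).2 ?_)
      obtain ⟨h1, h2⟩ := (diag_iff_Mg s' u w).1 h
      exact ⟨(hMuw false true).symm ▸ h1, (hMuw true false).symm ▸ h2⟩
    rw [PhiH_monomial_nondiag G u w s hdg, PhiH_monomial_nondiag G u w s' hdg']
lemma val_piS_of_ne {u w : V} (hu : u ≠ w) {v : V} (hv : v ≠ w) : (piS u w hu v).val = v := by
  rw [piS_of_ne hu hv]

lemma val_piS_w {u w : V} (hu : u ≠ w) : (piS u w hu w).val = u := by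
  rw [piS_w hu]

lemma Mg_diag_eq (t : (U → Bool) →₀ ℕ) (a : U)
    (c : Bool) : Mg t a c a c = Ng t a c := by
  unfold Mg Ng
  exact Finset.sum_congr rfl fun I _ => by simp only [and_self]

lemma TXeq (G : SimpleGraph V) (u w : V) (huw : G.Adj u w)
    (s s' : ({x : V // x ≠ w} → Bool) →₀ ℕ)
    (hM' : ∀ a b, (contractEdge G u w).Adj a b → ∀ c d, Mg s a c b d = Mg s' a c b d)
    (hN' : ∀ l, (∀ k, ¬ (contractEdge G u w).Adj l k) → ∀ c, Ng s l c = Ng s' l c) :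
    ∑ I' : {x : V // x ≠ w} → Bool, s I' • DD G (extS u w huw.ne I') =
      ∑ I' : {x : V // x ≠ w} → Bool, s' I' • DD G (extS u w huw.ne I') := by
  have hu : u ≠ w := huw.ne
  have hNall : ∀ (a : {x : V // x ≠ w}) (c : Bool), Ng s a c = Ng s' a c := by
    intro a c
    by_cases hiso : ∀ b, ¬ (contractEdge G u w).Adj a b
    · exact hN' a hiso c
    · push_neg at hiso
      obtain ⟨b, hb⟩ := hiso
      rw [Ng_eq_sum_Mg s a c b, Ng_eq_sum_Mg s' a c b]
      exact Finset.sum_congr rfl fun d _ => hM' a b hb c d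
  have hMpi : ∀ j k, G.Adj j k → ∀ c d,
      Mg s (piS u w hu j) c (piS u w hu k) d = Mg s' (piS u w hu j) c (piS u w hu k) d := by
    intro j k hjk c d
    by_cases hab : piS u w hu j = piS u w hu k
    · rw [hab]
      by_cases hcd : c = d
      · subst hcd
        rw [Mg_diag_eq, Mg_diag_eq, hNall]
      · rw [Mg_diag_ne _ _ hcd, Mg_diag_ne _ _ hcd]
    · refine hM' _ _ ⟨hab, ?_⟩ c d
      have hne : j ≠ k := G.ne_of_adj hjk
      by_cases hjw : j = w
      · have hkw : k ≠ w := fun h => hne (hjw.trans h.symm)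
        refine Or.inr (Or.inl ⟨?_, ?_⟩)
        · rw [hjw]; exact val_piS_w hu
        · rw [val_piS_of_ne hu hkw, ← hjw]; exact hjk
      · by_cases hkw : k = w
        · refine Or.inr (Or.inr ⟨?_, ?_⟩)
          · rw [hkw]; exact val_piS_w hu
          · rw [val_piS_of_ne hu hjw, ← hkw]; exact hjk.symm
        · refine Or.inl ?_
          rw [val_piS_of_ne hu hjw, val_piS_of_ne hu hkw]
          exact hjk
  letI : DecidableRel G.Adj := Classical.decRel _
  simp only [DD, smul_add, Finset.sum_add_distrib]
  refine congrArg₂ (· + ·) ?_ ?_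
  · simp only [Finset.smul_sum]
    rw [Finset.sum_comm, Finset.sum_comm (s := Finset.univ)]
    refine Finset.sum_congr rfl fun e => ?_
    induction e with
    | _ j k =>
      intro he
      have hjk : G.Adj j k := (G.mem_edgeSet).1 (SimpleGraph.mem_edgeFinset.1 he)
      simp only [Sym2.map_pair_eq, extS]
      rw [sum_smul_pair s (piS u w hu j) (piS u w hu k)
          (fun c d => Finsupp.single (Sum.inl s((j, c), (k, d))) (1:ℕ)),
        sum_smul_pair s' (piS u w hu j) (piS u w hu k)
          (fun c d => Finsupp.single (Sum.inl s((j, c), (k, d))) (1:ℕ))]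
      exact Finset.sum_congr rfl fun c _ => Finset.sum_congr rfl fun d _ => by
        rw [hMpi j k hjk c d]
  · simp only [Finset.smul_sum]
    rw [Finset.sum_comm, Finset.sum_comm (s := Finset.univ)]
    refine Finset.sum_congr rfl fun l hl => ?_
    simp only [extS]
    rw [sum_smul_single s (piS u w hu l)
        (fun c => Finsupp.single (Sum.inr (l, c)) (1:ℕ)),
      sum_smul_single s' (piS u w hu l)
        (fun c => Finsupp.single (Sum.inr (l, c)) (1:ℕ))]
    exact Finset.sum_congr rfl fun c _ => by rw [hNall]

set_option maxHeartbeats 1000000 in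
lemma keyXi (G : SimpleGraph V) (u w : V) (huw : G.Adj u w)
    (s s' : ({x : V // x ≠ w} → Bool) →₀ ℕ)
    (hT : TT (contractEdge G u w) s = TT (contractEdge G u w) s') :
    phi G (XiH u w huw.ne (monomial s 1)) = phi G (XiH u w huw.ne (monomial s' 1)) := by
  have hM' : ∀ a b, (contractEdge G u w).Adj a b → ∀ c d, Mg s a c b d = Mg s' a c b d :=
    fun a b hab c d => by
      rw [← TT_apply_inl _ s hab, ← TT_apply_inl _ s' hab, hT]
  have hN' : ∀ l, (∀ k, ¬ (contractEdge G u w).Adj l k) → ∀ c, Ng s l c = Ng s' l c :=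
    fun l hl c => by
      rw [← TT_apply_inr _ s hl, ← TT_apply_inr _ s' hl, hT]
  unfold XiH
  refine (phi_map_monomial G (fun K => extS u w huw.ne K) s).trans
    (Eq.trans ?_ (phi_map_monomial G (fun K => extS u w huw.ne K) s').symm)
  exact congrArg (fun t => monomial t (1:ℂ)) (TXeq G u w huw s s' hM' hN')


end EdgeContractionAux

/-- Lemma on edge contraction: if `f = ∏ p_{I_j} - ∏ p_{J_j}` is a nonzero
binomial in `I_G` all of whose index strings take equal values at the two adjacent vertices
`u` and `w`, then the image binomial `f̃` obtained by deleting the coordinate `w` lies in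
`I_{G/uw}`, and `f` is a minimal generator of `I_G` iff `f̃` is a minimal generator of
`I_{G/uw}`. -/
theorem minimalGenerator_contractEdge {V : Type} [Fintype V] [DecidableEq V]
    (G : SimpleGraph V) (u w : V) (huw : G.Adj u w) (d : ℕ)
    (Istr Jstr : Fin d → (V → Bool))
    (hI : ∀ j, Istr j u = Istr j w) (hJ : ∀ j, Jstr j u = Jstr j w)
    (f : MvPolynomial (V → Bool) ℂ)
    (hfdef : f = (∏ j : Fin d, X (Istr j)) - ∏ j : Fin d, X (Jstr j))
    (hf0 : f ≠ 0)
    (hfI : f ∈ toricIdeal G) :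
    ((∏ j : Fin d, X (fun x : {x : V // x ≠ w} => Istr j x.val)) -
        (∏ j : Fin d, X (fun x : {x : V // x ≠ w} => Jstr j x.val)) ∈
      toricIdeal (contractEdge G u w)) ∧
    (IsMinimalGenerator G f ↔
      IsMinimalGenerator (contractEdge G u w)
        ((∏ j : Fin d, X (fun x : {x : V // x ≠ w} => Istr j x.val)) -
          ∏ j : Fin d, X (fun x : {x : V // x ≠ w} => Jstr j x.val))) := by
  classical
  have hu : u ≠ w := huw.ne
  -- `PhiH` sends `f` to `f̃`
  have hPhif : PhiH G u w f =
      (∏ j : Fin d, X (fun x : {x : V // x ≠ w} => Istr j x.val)) -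
        ∏ j : Fin d, X (fun x : {x : V // x ≠ w} => Jstr j x.val) := by
    rw [hfdef, map_sub, map_prod, map_prod]
    refine congrArg₂ (· - ·) (Finset.prod_congr rfl fun j _ => ?_)
      (Finset.prod_congr rfl fun j _ => ?_)
    · show PhiH G u w (X (Istr j)) = _
      unfold PhiH
      rw [aeval_X, if_pos (hI j)]
      rfl
    · show PhiH G u w (X (Jstr j)) = _
      unfold PhiH
      rw [aeval_X, if_pos (hJ j)]
      rfl
  -- `XiH` sends `f̃` back to `f`
  have hXif : XiH u w hu
      ((∏ j : Fin d, X (fun x : {x : V // x ≠ w} => Istr j x.val)) -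
        ∏ j : Fin d, X (fun x : {x : V // x ≠ w} => Jstr j x.val)) = f := by
    rw [map_sub, map_prod, map_prod, hfdef]
    refine congrArg₂ (· - ·) (Finset.prod_congr rfl fun j _ => ?_)
      (Finset.prod_congr rfl fun j _ => ?_)
    · show XiH u w hu (X (fun x : {x : V // x ≠ w} => Istr j x.val)) = _
      unfold XiH
      rw [aeval_X]
      exact congrArg X (extS_resS hu (hI j))
    · show XiH u w hu (X (fun x : {x : V // x ≠ w} => Jstr j x.val)) = _
      unfold XiH
      rw [aeval_X]
      exact congrArg X (extS_resS hu (hJ j))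
  -- `PhiH` maps the toric ideal of `G` into that of the contraction
  have hkerPhi : ∀ g ∈ toricIdeal G, PhiH G u w g ∈ toricIdeal (contractEdge G u w) := by
    intro g hg
    have hg0 : phi G g = 0 := RingHom.mem_ker.1 hg
    have h0 : ((phi (contractEdge G u w)).comp (PhiH G u w)) g = 0 :=
      ker_le_ker (phi G) ((phi (contractEdge G u w)).comp (PhiH G u w)) (TT G)
        (phi_monomial G) (fun s s' h => keyPhi G u w huw s s' h) hg0
    exact RingHom.mem_ker.2 h0
  -- `XiH` maps the toric ideal of the contraction into that of `G`
  have hkerXi : ∀ g ∈ toricIdeal (contractEdge G u w), XiH u w hu g ∈ toricIdeal G := by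
    intro g hg
    have hg0 : phi (contractEdge G u w) g = 0 := RingHom.mem_ker.1 hg
    have h0 : ((phi G).comp (XiH u w hu)) g = 0 :=
      ker_le_ker (phi (contractEdge G u w)) ((phi G).comp (XiH u w hu))
        (TT (contractEdge G u w)) (phi_monomial (contractEdge G u w))
        (fun s s' h => keyXi G u w huw s s' h) hg0
    exact RingHom.mem_ker.2 h0
  -- `PhiH` maps the irrelevant ideal into the irrelevant ideal
  have hmPhi : ∀ g ∈ Ideal.span (Set.range (X : (V → Bool) → MvPolynomial (V → Bool) ℂ)),
      PhiH G u w g ∈ Ideal.span (Set.range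
        (X : ({x : V // x ≠ w} → Bool) → MvPolynomial ({x : V // x ≠ w} → Bool) ℂ)) := by
    intro g hg
    have hmem := Ideal.mem_map_of_mem (PhiH G u w) hg
    rw [Ideal.map_span] at hmem
    refine Ideal.span_le.2 ?_ hmem
    rintro _ ⟨_, ⟨K, rfl⟩, rfl⟩
    show PhiH G u w (X K) ∈ _
    unfold PhiH
    rw [aeval_X]
    by_cases hK : K u = K w
    · rw [if_pos hK]
      exact Ideal.subset_span ⟨resS w K, rfl⟩
    · rw [if_neg hK]
      exact zero_mem _
  have hmXi : ∀ g ∈ Ideal.span (Set.range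
      (X : ({x : V // x ≠ w} → Bool) → MvPolynomial ({x : V // x ≠ w} → Bool) ℂ)),
      XiH u w hu g ∈ Ideal.span (Set.range (X : (V → Bool) → MvPolynomial (V → Bool) ℂ)) := by
    intro g hg
    have hmem := Ideal.mem_map_of_mem (XiH u w hu) hg
    rw [Ideal.map_span] at hmem
    refine Ideal.span_le.2 ?_ hmem
    rintro _ ⟨_, ⟨K, rfl⟩, rfl⟩
    show XiH u w hu (X K) ∈ _
    unfold XiH
    rw [aeval_X]
    exact Ideal.subset_span ⟨extS u w hu K, rfl⟩
  -- products
  have hprodPhi : ∀ g ∈ Ideal.span (Set.range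
        (X : (V → Bool) → MvPolynomial (V → Bool) ℂ)) * toricIdeal G,
      PhiH G u w g ∈ Ideal.span (Set.range
        (X : ({x : V // x ≠ w} → Bool) → MvPolynomial ({x : V // x ≠ w} → Bool) ℂ)) *
          toricIdeal (contractEdge G u w) := by
    intro g hg
    refine Submodule.mul_induction_on hg (fun m hm n hn => ?_) (fun x y hx hy => ?_)
    · rw [map_mul]
      exact Ideal.mul_mem_mul (hmPhi m hm) (hkerPhi n hn)
    · rw [map_add]
      exact add_mem hx hy
  have hprodXi : ∀ g ∈ Ideal.span (Set.range
        (X : ({x : V // x ≠ w} → Bool) → MvPolynomial ({x : V // x ≠ w} → Bool) ℂ)) *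
          toricIdeal (contractEdge G u w),
      XiH u w hu g ∈ Ideal.span (Set.range
        (X : (V → Bool) → MvPolynomial (V → Bool) ℂ)) * toricIdeal G := by
    intro g hg
    refine Submodule.mul_induction_on hg (fun m hm n hn => ?_) (fun x y hx hy => ?_)
    · rw [map_mul]
      exact Ideal.mul_mem_mul (hmXi m hm) (hkerXi n hn)
    · rw [map_add]
      exact add_mem hx hy
  have hft : (∏ j : Fin d, X (fun x : {x : V // x ≠ w} => Istr j x.val)) -
      (∏ j : Fin d, X (fun x : {x : V // x ≠ w} => Jstr j x.val)) ∈
        toricIdeal (contractEdge G u w) := by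
    rw [← hPhif]
    exact hkerPhi f hfI
  refine ⟨hft, ?_, ?_⟩
  · rintro ⟨h1, h2⟩
    refine ⟨hft, fun hmem => h2 ?_⟩
    rw [← hXif]
    exact hprodXi _ hmem
  · rintro ⟨h1, h2⟩
    refine ⟨hfI, fun hmem => h2 ?_⟩
    rw [← hPhif]
    exact hprodPhi f hmem


end BinaryGraphModels
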